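/- Let p > 0, let A be a real d×d matrix with operator norm ‖A‖, and define u_p(k,t) = |k|^p exp(−(λ(p) − p‖A‖)t). Then u_p satisfies the supersolution inequality: for all k ∈ ℝ^d and t ≥ 0, u_p(k,t) ≥ e^{-t} |e^{-tA}k|^p + ∫₀ᵗ e^{-(t-τ)} L[u_p(·,τ)](e^{-(t-τ)A}k) dτ. -/

import Mathlib

open MeasureTheory
open scoped Classical Matrix
noncomputable section

/-- ℝ^d with the Euclidean structure. -/
abbrev Rd (d : ℕ) := EuclideanSpace ℝ (Fin d)

/-- The unit sphere S^{d-1} in ℝ^d. -/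
abbrev Sd (d : ℕ) := Metric.sphere (0 : Rd d) 1

/-- The surface measure on the unit sphere. -/
noncomputable def sphMeasure (d : ℕ) : Measure (Sd d) :=
  (volume : Measure (Rd d)).toSphere

/-- k₊ = (k + |k| n)/2. -/
noncomputable def kplus {d : ℕ} (k : Rd d) (n : Sd d) : Rd d :=
  (2⁻¹ : ℝ) • (k + ‖k‖ • (n : Rd d))

/-- k₋ = (k − |k| n)/2. -/
noncomputable def kminus {d : ℕ} (k : Rd d) (n : Sd d) : Rd d :=
  (2⁻¹ : ℝ) • (k - ‖k‖ • (n : Rd d))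

/-- k̂·n for k ≠ 0. -/
noncomputable def khatDot {d : ℕ} (k : Rd d) (n : Sd d) : ℝ :=
  inner ℝ (‖k‖⁻¹ • k) (n : Rd d)

/-- The gain operator I⁺(φ,ψ). -/
noncomputable def Iplus {d : ℕ} (g : ℝ → ℝ) (φ ψ : Rd d → ℂ) (k : Rd d) : ℂ :=
  if k = 0 then φ 0 * ψ 0
  else ∫ n, (g (khatDot k n) : ℂ) * φ (kplus k n) * ψ (kminus k n) ∂(sphMeasure d)

/-- Γ[φ] = I⁺(φ,φ). -/
noncomputable def Gam {d : ℕ} (g : ℝ → ℝ) (φ : Rd d → ℂ) : Rd d → ℂ :=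
  Iplus g φ φ

/-- The linearized operator L, complex-valued version. -/
noncomputable def LopC {d : ℕ} (g : ℝ → ℝ) (ψ : Rd d → ℂ) (k : Rd d) : ℂ :=
  if k = 0 then 2 * ψ 0
  else ∫ n, (g (khatDot k n) : ℂ) * (ψ (kplus k n) + ψ (kminus k n)) ∂(sphMeasure d)

/-- The linearized operator L, real-valued version. -/
noncomputable def LopR {d : ℕ} (g : ℝ → ℝ) (ψ : Rd d → ℝ) (k : Rd d) : ℝ :=
  if k = 0 then 2 * ψ 0
  else ∫ n, g (khatDot k n) * (ψ (kplus k n) + ψ (kminus k n)) ∂(sphMeasure d)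

/-- The Fourier transform (characteristic function) of a measure. -/
noncomputable def charFun {d : ℕ} (μ : Measure (Rd d)) (k : Rd d) : ℂ :=
  ∫ v, Complex.exp (-(Complex.I * ((inner ℝ k v : ℝ) : ℂ))) ∂μ

/-- φ is the characteristic function of a Borel probability measure on ℝ^d. -/
def IsCharFun {d : ℕ} (φ : Rd d → ℂ) : Prop :=
  ∃ μ : Measure (Rd d), IsProbabilityMeasure μ ∧ φ = _root_.charFun μ

/-- A matrix acting on ℝ^d as a continuous linear map. -/
noncomputable def matCLM {d : ℕ} (A : Matrix (Fin d) (Fin d) ℝ) : Rd d →L[ℝ] Rd d :=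
  LinearMap.toContinuousLinearMap (Matrix.toEuclideanLin A)

/-- The operator norm ‖A‖ = sup_{|k|=1} |Ak|. -/
noncomputable def opN {d : ℕ} (A : Matrix (Fin d) (Fin d) ℝ) : ℝ := ‖matCLM A‖

/-- e^{tA} k, matrix exponential applied to a vector. -/
noncomputable def expA {d : ℕ} (A : Matrix (Fin d) (Fin d) ℝ) (t : ℝ) (k : Rd d) : Rd d :=
  matCLM (NormedSpace.exp (t • A)) k

/-- A mild solution of the Fourier-transformed equation ∂ₜφ + φ + (Ak)·∂ₖφ = Γ[φ]. -/
def IsMildSolution {d : ℕ} (g : ℝ → ℝ) (A : Matrix (Fin d) (Fin d) ℝ)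
    (φ₀ : Rd d → ℂ) (φ : ℝ → Rd d → ℂ) : Prop :=
  (∀ t, 0 ≤ t → IsCharFun (φ t)) ∧
  (∀ t, 0 ≤ t → ∀ ε > (0:ℝ), ∃ δ > (0:ℝ), ∀ s, 0 ≤ s → |s - t| < δ →
      ∀ k, ‖φ s k - φ t k‖ ≤ ε) ∧
  (∀ t, 0 ≤ t → ∀ k, φ t k =
      (Real.exp (-t) : ℂ) * φ₀ (expA A (-t) k)
        + ∫ τ in (0:ℝ)..t, (Real.exp (-(t - τ)) : ℂ) * Gam g (φ τ) (expA A (-(t - τ)) k))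


open scoped RealInnerProductSpace

section Helpers

open NormedSpace

variable {d : ℕ}

lemma matCLM_eq (M : Matrix (Fin d) (Fin d) ℝ) :
    matCLM M = Matrix.toEuclideanCLM (𝕜 := ℝ) M :=
  ContinuousLinearMap.ext fun _ => rfl

lemma continuous_matCLM : Continuous fun M : Matrix (Fin d) (Fin d) ℝ => matCLM M := by
  have h : (fun M : Matrix (Fin d) (Fin d) ℝ => matCLM M) =
      ((LinearMap.toContinuousLinearMap.toLinearMap.comp
        (Matrix.toEuclideanLin (𝕜 := ℝ) (m := Fin d) (n := Fin d)).toLinearMap : _ →ₗ[ℝ] _)) :=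
    rfl
  rw [h]
  exact LinearMap.continuous_of_finiteDimensional _

lemma matCLM_exp (M : Matrix (Fin d) (Fin d) ℝ) :
    matCLM (exp M) = exp (matCLM M) := by
  letI : SeminormedRing (Matrix (Fin d) (Fin d) ℝ) := Matrix.linftyOpSemiNormedRing
  letI : NormedRing (Matrix (Fin d) (Fin d) ℝ) := Matrix.linftyOpNormedRing
  letI : NormedAlgebra ℝ (Matrix (Fin d) (Fin d) ℝ) := Matrix.linftyOpNormedAlgebra
  letI : NormedAlgebra ℚ (Matrix (Fin d) (Fin d) ℝ) := NormedAlgebra.restrictScalars ℚ ℝ _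
  have hc : Continuous (Matrix.toEuclideanCLM (𝕜 := ℝ) (n := Fin d)) := by
    have h : ⇑(Matrix.toEuclideanCLM (𝕜 := ℝ) (n := Fin d)) =
        fun M : Matrix (Fin d) (Fin d) ℝ => matCLM M :=
      funext fun M => (matCLM_eq M).symm
    rw [h]; exact continuous_matCLM
  have h := map_exp (Matrix.toEuclideanCLM (𝕜 := ℝ) (n := Fin d)) hc M
  rw [matCLM_eq, matCLM_eq]; exact h

lemma matCLM_smul (s : ℝ) (M : Matrix (Fin d) (Fin d) ℝ) :
    matCLM (s • M) = s • matCLM M :=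
  (LinearMap.toContinuousLinearMap.toLinearMap.comp
    (Matrix.toEuclideanLin (𝕜 := ℝ) (m := Fin d) (n := Fin d)).toLinearMap).map_smul s M

lemma expA_eq (A : Matrix (Fin d) (Fin d) ℝ) (s : ℝ) (k : Rd d) :
    expA A s k = exp (s • matCLM A) k := by
  rw [expA, matCLM_exp, matCLM_smul]

lemma norm_exp_clm_le (T : Rd d →L[ℝ] Rd d) : ‖exp T‖ ≤ Real.exp ‖T‖ := by
  rw [exp_eq_tsum (𝕂 := ℝ)]
  refine le_trans (norm_tsum_le_tsum_norm (norm_expSeries_summable' (𝕂 := ℝ) T)) ?_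
  have hs : Summable fun n : ℕ => ‖T‖ ^ n / (Nat.factorial n) := Real.summable_pow_div_factorial ‖T‖
  refine le_trans (Summable.tsum_le_tsum ?_ (norm_expSeries_summable' (𝕂 := ℝ) T) hs) ?_
  · intro n
    rw [norm_smul, norm_inv, Real.norm_natCast]
    cases n with
    | zero =>
      rw [pow_zero, pow_zero, Nat.factorial_zero, Nat.cast_one, inv_one, one_mul, div_one,
        ContinuousLinearMap.one_def]
      exact ContinuousLinearMap.norm_id_le
    | succ m =>
      rw [div_eq_inv_mul]
      exact mul_le_mul_of_nonneg_left (norm_pow_le' T m.succ_pos) (by positivity)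
  · rw [Real.exp_eq_exp_ℝ, exp_eq_tsum_div]

lemma norm_expA_le (A : Matrix (Fin d) (Fin d) ℝ) (s : ℝ) (k : Rd d) :
    ‖expA A s k‖ ≤ Real.exp (|s| * opN A) * ‖k‖ := by
  rw [expA_eq]
  calc ‖exp (s • matCLM A) k‖ ≤ ‖exp (s • matCLM A)‖ * ‖k‖ :=
        ContinuousLinearMap.le_opNorm _ _
    _ ≤ Real.exp ‖s • matCLM A‖ * ‖k‖ :=
        mul_le_mul_of_nonneg_right (norm_exp_clm_le _) (norm_nonneg k)
    _ = Real.exp (|s| * opN A) * ‖k‖ := by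
        rw [norm_smul s (matCLM A), Real.norm_eq_abs, opN]

lemma continuous_expA_comp (A : Matrix (Fin d) (Fin d) ℝ) (k : Rd d) {c : ℝ → ℝ}
    (hc : Continuous c) : Continuous fun τ => expA A (c τ) k := by
  simp only [expA_eq]
  exact (ContinuousLinearMap.apply ℝ (Rd d) k).continuous.comp
    (letI : NormedAlgebra ℚ (Rd d →L[ℝ] Rd d) := NormedAlgebra.restrictScalars ℚ ℝ _
    exp_continuous.comp (hc.smul continuous_const))

lemma norm_coe_sphere (n : Sd d) : ‖(n : Rd d)‖ = 1 := by
  have := n.2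
  rwa [mem_sphere_iff_norm, sub_zero] at this

lemma rpow_of_sq {x y c : ℝ} (hx : 0 ≤ x) (hy : 0 ≤ y) (hc : 0 ≤ c)
    (h : x ^ (2 : ℕ) = y ^ (2 : ℕ) * c) (p : ℝ) :
    x ^ p = y ^ p * c ^ (p / 2) := by
  have h2 : ∀ z : ℝ, 0 ≤ z → z ^ p = (z ^ (2 : ℕ)) ^ (p / 2) := by
    intro z hz
    rw [← Real.rpow_natCast z 2, ← Real.rpow_mul hz]
    congr 1
    push_cast
    ring
  rw [h2 x hx, h, Real.mul_rpow (pow_nonneg hy 2) hc, ← h2 y hy]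

lemma khat_inner (k : Rd d) (hk : k ≠ 0) (n : Sd d) :
    ⟪k, (n : Rd d)⟫ = ‖k‖ * khatDot k n := by
  rw [khatDot, real_inner_smul_left, ← mul_assoc,
    mul_inv_cancel₀ (norm_ne_zero_iff.2 hk), one_mul]

lemma abs_khatDot_le (k : Rd d) (hk : k ≠ 0) (n : Sd d) : |khatDot k n| ≤ 1 := by
  rw [khatDot]
  refine le_trans (abs_real_inner_le_norm _ _) ?_
  rw [norm_smul, norm_inv, Real.norm_eq_abs, abs_norm, norm_coe_sphere,
    inv_mul_cancel₀ (norm_ne_zero_iff.2 hk), one_mul]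

lemma norm_kplus_rpow (k : Rd d) (hk : k ≠ 0) (n : Sd d) (p : ℝ) :
    ‖kplus k n‖ ^ p = ‖k‖ ^ p * ((1 + khatDot k n) / 2) ^ (p / 2) := by
  have habs := abs_khatDot_le k hk n
  refine rpow_of_sq (norm_nonneg _) (norm_nonneg _) (by cases abs_le.1 habs; linarith) ?_ p
  rw [kplus, norm_smul]
  rw [mul_pow, norm_add_sq_real, real_inner_smul_right, khat_inner k hk n,
    norm_smul, norm_coe_sphere]
  simp only [norm_inv, Real.norm_ofNat, Real.norm_eq_abs, abs_norm]
  ring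

lemma norm_kminus_rpow (k : Rd d) (hk : k ≠ 0) (n : Sd d) (p : ℝ) :
    ‖kminus k n‖ ^ p = ‖k‖ ^ p * ((1 - khatDot k n) / 2) ^ (p / 2) := by
  have habs := abs_khatDot_le k hk n
  refine rpow_of_sq (norm_nonneg _) (norm_nonneg _) (by cases abs_le.1 habs; linarith) ?_ p
  rw [kminus, norm_smul]
  rw [mul_pow, norm_sub_sq_real, real_inner_smul_right, khat_inner k hk n,
    norm_smul, norm_coe_sphere]
  simp only [norm_inv, Real.norm_ofNat, Real.norm_eq_abs, abs_norm]
  ring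

lemma key_int (g : ℝ → ℝ) (hg_meas : Measurable g) (hg_nonneg : ∀ x, 0 ≤ g x)
    (hg_norm : ∀ ω : Rd d, ‖ω‖ = 1 → ∫ n, g ⟪ω, (n : Rd d)⟫ ∂(sphMeasure d) = 1)
    (p : ℝ) (hp : 0 < p) (lam : ℝ)
    (hlam : ∀ ω : Rd d, ‖ω‖ = 1 →
      (∫ n, g ⟪ω, (n : Rd d)⟫ *
          (1 - ((1 + ⟪ω, (n : Rd d)⟫) / 2) ^ (p / 2)
             - ((1 - ⟪ω, (n : Rd d)⟫) / 2) ^ (p / 2)) ∂(sphMeasure d)) = lam)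
    (ω : Rd d) (hω : ‖ω‖ = 1) :
    ∫ n, g ⟪ω, (n : Rd d)⟫ *
        (((1 + ⟪ω, (n : Rd d)⟫) / 2) ^ (p / 2)
          + ((1 - ⟪ω, (n : Rd d)⟫) / 2) ^ (p / 2)) ∂(sphMeasure d) = 1 - lam := by
  have hcont : Continuous fun n : Sd d => ⟪ω, (n : Rd d)⟫ :=
    continuous_const.inner continuous_subtype_val
  have habs : ∀ n : Sd d, |⟪ω, (n : Rd d)⟫| ≤ 1 := fun n => by
    refine le_trans (abs_real_inner_le_norm _ _) ?_
    rw [hω, norm_coe_sphere, one_mul]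
  have hg1 : Integrable (fun n : Sd d => g ⟪ω, (n : Rd d)⟫) (sphMeasure d) := by
    by_contra h
    have h0 := hg_norm ω hω
    rw [integral_undef h] at h0
    exact zero_ne_one h0
  have hABcont : Continuous fun n : Sd d =>
      ((1 + ⟪ω, (n : Rd d)⟫) / 2) ^ (p / 2) + ((1 - ⟪ω, (n : Rd d)⟫) / 2) ^ (p / 2) := by
    apply Continuous.add
    · exact ((continuous_const.add hcont).div_const 2).rpow_const fun _ => Or.inr (by positivity)
    · exact ((continuous_const.sub hcont).div_const 2).rpow_const fun _ => Or.inr (by positivity)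
  have hABle : ∀ n : Sd d,
      ((1 + ⟪ω, (n : Rd d)⟫) / 2) ^ (p / 2) + ((1 - ⟪ω, (n : Rd d)⟫) / 2) ^ (p / 2) ≤ 2 := by
    intro n
    obtain ⟨h1, h2⟩ := abs_le.1 (habs n)
    have e1 : ((1 + ⟪ω, (n : Rd d)⟫) / 2) ^ (p / 2) ≤ 1 :=
      Real.rpow_le_one (by linarith) (by linarith) (by positivity)
    have e2 : ((1 - ⟪ω, (n : Rd d)⟫) / 2) ^ (p / 2) ≤ 1 :=
      Real.rpow_le_one (by linarith) (by linarith) (by positivity)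
    linarith
  have hABnonneg : ∀ n : Sd d,
      0 ≤ ((1 + ⟪ω, (n : Rd d)⟫) / 2) ^ (p / 2) + ((1 - ⟪ω, (n : Rd d)⟫) / 2) ^ (p / 2) := by
    intro n
    obtain ⟨h1, h2⟩ := abs_le.1 (habs n)
    have := Real.rpow_nonneg (show (0:ℝ) ≤ (1 + ⟪ω, (n : Rd d)⟫) / 2 by linarith) (p / 2)
    have := Real.rpow_nonneg (show (0:ℝ) ≤ (1 - ⟪ω, (n : Rd d)⟫) / 2 by linarith) (p / 2)
    linarith
  have hg2 : Integrable (fun n : Sd d => g ⟪ω, (n : Rd d)⟫ *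
      (((1 + ⟪ω, (n : Rd d)⟫) / 2) ^ (p / 2) + ((1 - ⟪ω, (n : Rd d)⟫) / 2) ^ (p / 2)))
      (sphMeasure d) := by
    refine (hg1.const_mul 2).mono'
      (((hg_meas.comp hcont.measurable).aestronglyMeasurable).mul
        hABcont.aestronglyMeasurable) ?_
    refine Filter.Eventually.of_forall fun n => ?_
    rw [Real.norm_eq_abs, abs_of_nonneg (mul_nonneg (hg_nonneg _) (hABnonneg n))]
    calc g ⟪ω, (n : Rd d)⟫ * _ ≤ g ⟪ω, (n : Rd d)⟫ * 2 :=
          mul_le_mul_of_nonneg_left (hABle n) (hg_nonneg _)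
      _ = 2 * g ⟪ω, (n : Rd d)⟫ := mul_comm _ _
  have hsplit : (fun n : Sd d => g ⟪ω, (n : Rd d)⟫ *
        (1 - ((1 + ⟪ω, (n : Rd d)⟫) / 2) ^ (p / 2) - ((1 - ⟪ω, (n : Rd d)⟫) / 2) ^ (p / 2)))
      = fun n : Sd d => g ⟪ω, (n : Rd d)⟫ - g ⟪ω, (n : Rd d)⟫ *
        (((1 + ⟪ω, (n : Rd d)⟫) / 2) ^ (p / 2) + ((1 - ⟪ω, (n : Rd d)⟫) / 2) ^ (p / 2)) :=
    funext fun n => by ring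
  have h3 := hlam ω hω
  rw [hsplit, integral_sub hg1 hg2, hg_norm ω hω] at h3
  linarith

lemma lopr_eq (g : ℝ → ℝ) (hg_meas : Measurable g) (hg_nonneg : ∀ x, 0 ≤ g x)
    (hg_norm : ∀ ω : Rd d, ‖ω‖ = 1 → ∫ n, g ⟪ω, (n : Rd d)⟫ ∂(sphMeasure d) = 1)
    (p : ℝ) (hp : 0 < p) (lam : ℝ)
    (hlam : ∀ ω : Rd d, ‖ω‖ = 1 →
      (∫ n, g ⟪ω, (n : Rd d)⟫ *
          (1 - ((1 + ⟪ω, (n : Rd d)⟫) / 2) ^ (p / 2)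
             - ((1 - ⟪ω, (n : Rd d)⟫) / 2) ^ (p / 2)) ∂(sphMeasure d)) = lam)
    (E : ℝ) (k : Rd d) :
    LopR g (fun x => ‖x‖ ^ p * E) k = (1 - lam) * (‖k‖ ^ p * E) := by
  by_cases hk : k = 0
  · subst hk
    simp [LopR, Real.zero_rpow hp.ne']
  · rw [LopR, if_neg hk]
    have hω1 : ‖(‖k‖⁻¹ • k : Rd d)‖ = 1 := by
      rw [norm_smul, norm_inv, Real.norm_eq_abs, abs_norm,
        inv_mul_cancel₀ (norm_ne_zero_iff.2 hk)]
    have hinteq : ∀ n : Sd d,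
        g (khatDot k n) * (‖kplus k n‖ ^ p * E + ‖kminus k n‖ ^ p * E)
        = (‖k‖ ^ p * E) * (g ⟪(‖k‖⁻¹ • k : Rd d), (n : Rd d)⟫ *
            (((1 + ⟪(‖k‖⁻¹ • k : Rd d), (n : Rd d)⟫) / 2) ^ (p / 2)
              + ((1 - ⟪(‖k‖⁻¹ • k : Rd d), (n : Rd d)⟫) / 2) ^ (p / 2))) := by
      intro n
      have hid : khatDot k n = ⟪(‖k‖⁻¹ • k : Rd d), (n : Rd d)⟫ := rfl
      rw [norm_kplus_rpow k hk n p, norm_kminus_rpow k hk n p, hid]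
      ring
    simp only [hinteq]
    rw [integral_const_mul, key_int g hg_meas hg_nonneg hg_norm p hp lam hlam _ hω1]
    ring

end Helpers

/-- The function u_p(k,t) = |k|^p e^{−(λ(p)−p‖A‖)t} is a supersolution
    of the linear problem with initial datum |k|^p. -/
theorem up_is_supersolution (d : ℕ) (hd : 2 ≤ d)
    (g : ℝ → ℝ) (hg_meas : Measurable g) (hg_nonneg : ∀ x, 0 ≤ g x)
    (hg_norm : ∀ ω : Rd d, ‖ω‖ = 1 → ∫ n, g ⟪ω, (n : Rd d)⟫ ∂(sphMeasure d) = 1)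
    (p : ℝ) (hp : 0 < p)
    (A : Matrix (Fin d) (Fin d) ℝ)
    (lam : ℝ)
    (hlam : ∀ ω : Rd d, ‖ω‖ = 1 →
      (∫ n, g ⟪ω, (n : Rd d)⟫ *
          (1 - ((1 + ⟪ω, (n : Rd d)⟫) / 2) ^ (p / 2)
             - ((1 - ⟪ω, (n : Rd d)⟫) / 2) ^ (p / 2)) ∂(sphMeasure d)) = lam) :
    ∀ t, 0 ≤ t → ∀ k : Rd d,
      Real.exp (-t) * ‖expA A (-t) k‖ ^ p
          + (∫ τ in (0:ℝ)..t, Real.exp (-(t - τ)) *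
              LopR g (fun x => ‖x‖ ^ p * Real.exp (-(lam - p * opN A) * τ))
                (expA A (-(t - τ)) k))
        ≤ ‖k‖ ^ p * Real.exp (-(lam - p * opN A) * t) := by
  intro t ht k
  have ha0 : (0:ℝ) ≤ opN A := norm_nonneg _
  obtain ⟨ω₀, hω₀⟩ : ∃ ω : Rd d, ‖ω‖ = 1 := by
    refine ⟨EuclideanSpace.single (⟨0, by omega⟩ : Fin d) (1:ℝ), ?_⟩
    rw [EuclideanSpace.norm_single]; norm_num
  have hlam1 : lam ≤ 1 := by
    have hk := key_int g hg_meas hg_nonneg hg_norm p hp lam hlam ω₀ hω₀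
    have hnn : 0 ≤ ∫ n, g ⟪ω₀, (n : Rd d)⟫ *
        (((1 + ⟪ω₀, (n : Rd d)⟫) / 2) ^ (p / 2)
          + ((1 - ⟪ω₀, (n : Rd d)⟫) / 2) ^ (p / 2)) ∂(sphMeasure d) := by
      refine integral_nonneg fun n => ?_
      refine mul_nonneg (hg_nonneg _) ?_
      have habs : |⟪ω₀, (n : Rd d)⟫| ≤ 1 := by
        refine le_trans (abs_real_inner_le_norm _ _) ?_
        rw [hω₀, norm_coe_sphere, one_mul]
      obtain ⟨h1, h2⟩ := abs_le.1 habs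
      have e1 := Real.rpow_nonneg (show (0:ℝ) ≤ (1 + ⟪ω₀, (n : Rd d)⟫)/2 by linarith) (p/2)
      have e2 := Real.rpow_nonneg (show (0:ℝ) ≤ (1 - ⟪ω₀, (n : Rd d)⟫)/2 by linarith) (p/2)
      linarith
    rw [hk] at hnn
    linarith
  have hc0 : (0:ℝ) ≤ 1 - lam := by linarith
  -- first term bound
  have hT1 : Real.exp (-t) * ‖expA A (-t) k‖ ^ p
      ≤ ‖k‖ ^ p * Real.exp ((p * opN A - 1) * t) := by
    have h1 : ‖expA A (-t) k‖ ≤ Real.exp (t * opN A) * ‖k‖ := by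
      have := norm_expA_le A (-t) k
      rwa [abs_neg, abs_of_nonneg ht] at this
    have h2 : ‖expA A (-t) k‖ ^ p ≤ Real.exp (t * opN A * p) * ‖k‖ ^ p := by
      refine le_trans (Real.rpow_le_rpow (norm_nonneg _) h1 hp.le) ?_
      rw [Real.mul_rpow (Real.exp_pos _).le (norm_nonneg _), ← Real.exp_mul]
    calc Real.exp (-t) * ‖expA A (-t) k‖ ^ p
        ≤ Real.exp (-t) * (Real.exp (t * opN A * p) * ‖k‖ ^ p) :=
          mul_le_mul_of_nonneg_left h2 (Real.exp_pos _).le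
      _ = Real.exp (-t + t * opN A * p) * ‖k‖ ^ p := by rw [← mul_assoc, ← Real.exp_add]
      _ = ‖k‖ ^ p * Real.exp ((p * opN A - 1) * t) := by
          rw [show -t + t * opN A * p = (p * opN A - 1) * t by ring, mul_comm]
  -- rewrite the integral using lopr_eq
  have hint_eq : (∫ τ in (0:ℝ)..t, Real.exp (-(t - τ)) *
        LopR g (fun x => ‖x‖ ^ p * Real.exp (-(lam - p * opN A) * τ)) (expA A (-(t - τ)) k))
      = ∫ τ in (0:ℝ)..t, Real.exp (-(t - τ)) *
          ((1 - lam) * (‖expA A (-(t - τ)) k‖ ^ p * Real.exp (-(lam - p * opN A) * τ))) := by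
    refine intervalIntegral.integral_congr fun τ _ => ?_
    rw [lopr_eq g hg_meas hg_nonneg hg_norm p hp lam hlam _ _]
  have hcontq : Continuous fun τ : ℝ => expA A (-(t - τ)) k :=
    continuous_expA_comp A k (by continuity)
  have hf_cont : Continuous fun τ : ℝ => Real.exp (-(t - τ)) *
      ((1 - lam) * (‖expA A (-(t - τ)) k‖ ^ p * Real.exp (-(lam - p * opN A) * τ))) := by
    apply Continuous.mul
    · exact Real.continuous_exp.comp (by continuity)
    · apply continuous_const.mul
      apply Continuous.mul
      · exact hcontq.norm.rpow_const fun _ => Or.inr hp.le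
      · exact Real.continuous_exp.comp (by continuity)
  have hh_cont : Continuous fun τ : ℝ =>
      (1 - lam) * (‖k‖ ^ p * Real.exp ((p * opN A - 1) * t)) * Real.exp ((1 - lam) * τ) := by
    continuity
  have hle : ∀ τ ∈ Set.Icc (0:ℝ) t,
      Real.exp (-(t - τ)) *
          ((1 - lam) * (‖expA A (-(t - τ)) k‖ ^ p * Real.exp (-(lam - p * opN A) * τ)))
      ≤ (1 - lam) * (‖k‖ ^ p * Real.exp ((p * opN A - 1) * t)) * Real.exp ((1 - lam) * τ) := by
    intro τ hτ
    obtain ⟨hτ0, hτt⟩ := hτ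
    have h1 : ‖expA A (-(t - τ)) k‖ ≤ Real.exp ((t - τ) * opN A) * ‖k‖ := by
      have := norm_expA_le A (-(t - τ)) k
      rwa [abs_neg, abs_of_nonneg (by linarith)] at this
    have h2 : ‖expA A (-(t - τ)) k‖ ^ p ≤ Real.exp ((t - τ) * opN A * p) * ‖k‖ ^ p := by
      refine le_trans (Real.rpow_le_rpow (norm_nonneg _) h1 hp.le) ?_
      rw [Real.mul_rpow (Real.exp_pos _).le (norm_nonneg _), ← Real.exp_mul]
    have hE : Real.exp (-(t - τ)) * (Real.exp ((t - τ) * opN A * p) *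
        Real.exp (-(lam - p * opN A) * τ))
        = Real.exp ((p * opN A - 1) * t) * Real.exp ((1 - lam) * τ) := by
      rw [← Real.exp_add, ← Real.exp_add, ← Real.exp_add]
      congr 1; ring
    calc Real.exp (-(t - τ)) *
          ((1 - lam) * (‖expA A (-(t - τ)) k‖ ^ p * Real.exp (-(lam - p * opN A) * τ)))
        ≤ Real.exp (-(t - τ)) * ((1 - lam) *
            ((Real.exp ((t - τ) * opN A * p) * ‖k‖ ^ p) * Real.exp (-(lam - p * opN A) * τ))) := by
          refine mul_le_mul_of_nonneg_left (mul_le_mul_of_nonneg_left ?_ hc0) (Real.exp_pos _).le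
          exact mul_le_mul_of_nonneg_right h2 (Real.exp_pos _).le
      _ = (1 - lam) * ‖k‖ ^ p * (Real.exp (-(t - τ)) *
            (Real.exp ((t - τ) * opN A * p) * Real.exp (-(lam - p * opN A) * τ))) := by ring
      _ = (1 - lam) * ‖k‖ ^ p *
            (Real.exp ((p * opN A - 1) * t) * Real.exp ((1 - lam) * τ)) := by rw [hE]
      _ = (1 - lam) * (‖k‖ ^ p * Real.exp ((p * opN A - 1) * t)) * Real.exp ((1 - lam) * τ) := by
          ring
  have hInt2 : (∫ τ in (0:ℝ)..t,
        (1 - lam) * (‖k‖ ^ p * Real.exp ((p * opN A - 1) * t)) * Real.exp ((1 - lam) * τ))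
      = ‖k‖ ^ p * Real.exp ((p * opN A - 1) * t) * (Real.exp ((1 - lam) * t) - 1) := by
    rw [intervalIntegral.integral_const_mul]
    have hder : ∀ x ∈ Set.uIcc (0:ℝ) t, HasDerivAt (fun y => Real.exp ((1 - lam) * y))
        (Real.exp ((1 - lam) * x) * (1 - lam)) x := by
      intro x _
      simpa using ((hasDerivAt_id x).const_mul (1 - lam)).exp
    have hii : IntervalIntegrable (fun x => Real.exp ((1 - lam) * x) * (1 - lam)) volume 0 t :=
      (Continuous.mul (by continuity) continuous_const).intervalIntegrable _ _
    have h4 := intervalIntegral.integral_eq_sub_of_hasDerivAt hder hii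
    rw [intervalIntegral.integral_mul_const] at h4
    norm_num at h4
    have h5 : (1 - lam) * (∫ τ in (0:ℝ)..t, Real.exp ((1 - lam) * τ))
        = Real.exp ((1 - lam) * t) - 1 := by linarith
    linear_combination (‖k‖ ^ p * Real.exp ((p * opN A - 1) * t)) * h5
  have hIle : (∫ τ in (0:ℝ)..t, Real.exp (-(t - τ)) *
        LopR g (fun x => ‖x‖ ^ p * Real.exp (-(lam - p * opN A) * τ)) (expA A (-(t - τ)) k))
      ≤ ‖k‖ ^ p * Real.exp ((p * opN A - 1) * t) * (Real.exp ((1 - lam) * t) - 1) := by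
    rw [hint_eq]
    exact le_trans (intervalIntegral.integral_mono_on ht (hf_cont.intervalIntegrable _ _)
      (hh_cont.intervalIntegrable _ _) hle) (le_of_eq hInt2)
  have hfin : Real.exp ((p * opN A - 1) * t) * Real.exp ((1 - lam) * t)
      = Real.exp (-(lam - p * opN A) * t) := by
    rw [← Real.exp_add]; congr 1; ring
  calc Real.exp (-t) * ‖expA A (-t) k‖ ^ p
        + (∫ τ in (0:ℝ)..t, Real.exp (-(t - τ)) *
            LopR g (fun x => ‖x‖ ^ p * Real.exp (-(lam - p * opN A) * τ)) (expA A (-(t - τ)) k))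
      ≤ ‖k‖ ^ p * Real.exp ((p * opN A - 1) * t)
        + ‖k‖ ^ p * Real.exp ((p * opN A - 1) * t) * (Real.exp ((1 - lam) * t) - 1) :=
        add_le_add hT1 hIle
    _ = ‖k‖ ^ p * (Real.exp ((p * opN A - 1) * t) * Real.exp ((1 - lam) * t)) := by ring
    _ = ‖k‖ ^ p * Real.exp (-(lam - p * opN A) * t) := by rw [hfin]

end
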